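/- Let a, b ∈ ℝ^d, λ, η > 0, and ĝ = (λ a + η b)/2. Define ḡ ∈ ℝ^d piecewise: ḡ = ĝ if ⟨ĝ, a⟩ ≥ 0 and ⟨ĝ, b⟩ ≥ 0; ḡ = ĝ − (⟨ĝ, a⟩/‖a‖²) a if ⟨ĝ, a⟩ < 0 and ⟨ĝ, b⟩ ≥ 0; ḡ = ĝ − (⟨ĝ, b⟩/‖b‖²) b if ⟨ĝ, a⟩ ≥ 0 and ⟨ĝ, b⟩ < 0. Then ḡ is feasible (⟨ḡ, a⟩ ≥ 0 and ⟨ḡ, b⟩ ≥ 0), and ḡ minimizes ‖g − ĝ‖² over all g ∈ ℝ^d satisfying ⟨g, a⟩ ≥ 0 and ⟨g, b⟩ ≥ 0, i.e., ‖ḡ − ĝ‖ ≤ ‖g − ĝ‖ for every such feasible g. -/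
import Mathlib


open scoped RealInnerProductSpace

/-- The constrained projection `ḡ` (explicit solution of the minimization problem
`min ‖g − (λ a + η b)/2‖²` s.t. `⟨g,a⟩ ≥ 0`, `⟨g,b⟩ ≥ 0`).  The final case is
unreachable for `λ, η > 0`. -/
noncomputable def gbar {d : ℕ} (lam eta : ℝ) (a b : EuclideanSpace ℝ (Fin d)) :
    EuclideanSpace ℝ (Fin d) :=
  let gh := (2 : ℝ)⁻¹ • (lam • a + eta • b)
  if 0 ≤ ⟪gh, a⟫ ∧ 0 ≤ ⟪gh, b⟫ then gh
  else if ⟪gh, a⟫ < 0 ∧ 0 ≤ ⟪gh, b⟫ then gh - (⟪gh, a⟫ / ‖a‖ ^ 2) • a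
  else if 0 ≤ ⟪gh, a⟫ ∧ ⟪gh, b⟫ < 0 then gh - (⟪gh, b⟫ / ‖b‖ ^ 2) • b
  else gh

-- auxiliary minimality lemma: projection onto the halfspace {g : ⟪g,a⟫ ≥ 0}
lemma aux_min {d : ℕ} (gh a : EuclideanSpace ℝ (Fin d)) (h : ⟪gh, a⟫ < 0)
    (g : EuclideanSpace ℝ (Fin d)) (hg : 0 ≤ ⟪g, a⟫) :
    ‖(gh - (⟪gh, a⟫ / ‖a‖ ^ 2) • a) - gh‖ ≤ ‖g - gh‖ := by
  have ha : a ≠ 0 := by rintro rfl; simp at h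
  have hna : (0:ℝ) < ‖a‖ ^ 2 := pow_pos (norm_pos_iff.mpr ha) 2
  set c : ℝ := -(⟪gh, a⟫ / ‖a‖ ^ 2) with hc
  have hc0 : 0 ≤ c := by
    have := div_neg_of_neg_of_pos h hna
    simp only [hc]; linarith
  set gb := gh - (⟪gh, a⟫ / ‖a‖ ^ 2) • a with hgbdef
  have hdec : g - gh = (g - gb) + c • a := by
    rw [hgbdef, hc]; module
  have hkey : ⟪g - gb, c • a⟫ = c * ⟪g, a⟫ := by
    rw [real_inner_smul_right, hgbdef, inner_sub_left, inner_sub_left, real_inner_smul_left,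
      real_inner_self_eq_norm_sq, div_mul_cancel₀ _ (ne_of_gt hna)]
    ring
  have hsq := @norm_add_sq_real (EuclideanSpace ℝ (Fin d)) _ _ (g - gb) (c • a)
  rw [← hdec, hkey] at hsq
  have hbg : gb - gh = c • a := by rw [hgbdef, hc]; module
  have h1 : 0 ≤ c * ⟪g, a⟫ := mul_nonneg hc0 hg
  have h2 : ‖gb - gh‖ ^ 2 ≤ ‖g - gh‖ ^ 2 := by
    rw [hbg, hsq]; nlinarith [sq_nonneg ‖g - gb‖]
  nlinarith [norm_nonneg (gb - gh), norm_nonneg (g - gh)]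

/-- The piecewise-defined `ḡ` is feasible (`⟨ḡ, a⟩ ≥ 0` and `⟨ḡ, b⟩ ≥ 0`) and minimizes
`‖g − ĝ‖²` over all `g` with `⟨g, a⟩ ≥ 0` and `⟨g, b⟩ ≥ 0`, where
`ĝ = (λ a + η b)/2`. -/
theorem gbar_is_projection {d : ℕ} (a b : EuclideanSpace ℝ (Fin d))
    (lam eta : ℝ) (hlam : 0 < lam) (heta : 0 < eta)
    (ghat : EuclideanSpace ℝ (Fin d)) (hghat : ghat = (2 : ℝ)⁻¹ • (lam • a + eta • b)) :
    0 ≤ ⟪gbar lam eta a b, a⟫ ∧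
    0 ≤ ⟪gbar lam eta a b, b⟫ ∧
    ∀ g : EuclideanSpace ℝ (Fin d),
      0 ≤ ⟪g, a⟫ → 0 ≤ ⟪g, b⟫ → ‖gbar lam eta a b - ghat‖ ≤ ‖g - ghat‖ := by
  obtain ⟨gh, hgh⟩ : ∃ gh : EuclideanSpace ℝ (Fin d),
      gh = (2 : ℝ)⁻¹ • (lam • a + eta • b) := ⟨_, rfl⟩
  have hghat' : ghat = gh := by rw [hghat, hgh]
  have hga : ⟪gh, a⟫ = 2⁻¹ * (lam * ‖a‖ ^ 2 + eta * ⟪a, b⟫) := by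
    rw [hgh, real_inner_smul_left, inner_add_left, real_inner_smul_left, real_inner_smul_left,
      real_inner_self_eq_norm_sq, real_inner_comm b a]
  have hgb : ⟪gh, b⟫ = 2⁻¹ * (lam * ⟪a, b⟫ + eta * ‖b‖ ^ 2) := by
    rw [hgh, real_inner_smul_left, inner_add_left, real_inner_smul_left, real_inner_smul_left,
      real_inner_self_eq_norm_sq]
  have hcs : ⟪a, b⟫ * ⟪a, b⟫ ≤ (‖a‖ ^ 2) * (‖b‖ ^ 2) := by
    have := real_inner_mul_inner_self_le a b
    rwa [real_inner_self_eq_norm_sq, real_inner_self_eq_norm_sq] at this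
  have hG : gbar lam eta a b =
      (if 0 ≤ ⟪gh, a⟫ ∧ 0 ≤ ⟪gh, b⟫ then gh
      else if ⟪gh, a⟫ < 0 ∧ 0 ≤ ⟪gh, b⟫ then gh - (⟪gh, a⟫ / ‖a‖ ^ 2) • a
      else if 0 ≤ ⟪gh, a⟫ ∧ ⟪gh, b⟫ < 0 then gh - (⟪gh, b⟫ / ‖b‖ ^ 2) • b
      else gh) := by rw [hgh]; rfl
  by_cases h1 : 0 ≤ ⟪gh, a⟫ ∧ 0 ≤ ⟪gh, b⟫
  · rw [hG, if_pos h1]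
    refine ⟨h1.1, h1.2, fun g _ _ => ?_⟩
    rw [hghat']
    simp [norm_nonneg]
  by_cases h2 : ⟪gh, a⟫ < 0 ∧ 0 ≤ ⟪gh, b⟫
  · rw [hG, if_neg h1, if_pos h2]
    have ha : a ≠ 0 := by rintro rfl; simpa using h2.1
    have hna : (0:ℝ) < ‖a‖ ^ 2 := pow_pos (norm_pos_iff.mpr ha) 2
    refine ⟨?_, ?_, fun g hg _ => ?_⟩
    · rw [inner_sub_left, real_inner_smul_left, real_inner_self_eq_norm_sq,
        div_mul_cancel₀ _ (ne_of_gt hna), sub_self]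
    · rw [inner_sub_left, real_inner_smul_left, hga, hgb, sub_nonneg,
        div_mul_eq_mul_div, div_le_iff₀ hna]
      nlinarith [mul_nonneg heta.le (sub_nonneg.mpr hcs)]
    · rw [hghat']
      exact aux_min gh a h2.1 g hg
  by_cases h3 : 0 ≤ ⟪gh, a⟫ ∧ ⟪gh, b⟫ < 0
  · rw [hG, if_neg h1, if_neg h2, if_pos h3]
    have hb : b ≠ 0 := by rintro rfl; simpa using h3.2
    have hnb : (0:ℝ) < ‖b‖ ^ 2 := pow_pos (norm_pos_iff.mpr hb) 2
    refine ⟨?_, ?_, fun g _ hg => ?_⟩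
    · have hba : ⟪b, a⟫ = ⟪a, b⟫ := real_inner_comm a b
      rw [inner_sub_left, real_inner_smul_left, hba, hga, hgb, sub_nonneg,
        div_mul_eq_mul_div, div_le_iff₀ hnb]
      nlinarith [mul_nonneg hlam.le (sub_nonneg.mpr hcs)]
    · rw [inner_sub_left, real_inner_smul_left, real_inner_self_eq_norm_sq,
        div_mul_cancel₀ _ (ne_of_gt hnb), sub_self]
    · rw [hghat']
      exact aux_min gh b h3.2 g hg
  · exfalso
    push_neg at h1 h2 h3
    rcases le_or_gt 0 ⟪gh, a⟫ with hA | hA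
    · exact absurd (h3 hA) (not_le.mpr (h1 hA))
    · have hB := h2 hA
      have hnn : 0 ≤ ⟪gh, gh⟫ := real_inner_self_nonneg
      have hexp : ⟪gh, gh⟫ = 2⁻¹ * (lam * ⟪gh, a⟫ + eta * ⟪gh, b⟫) := by
        nth_rewrite 2 [hgh]
        rw [real_inner_smul_right, inner_add_right, real_inner_smul_right,
          real_inner_smul_right]
      rw [hexp] at hnn
      nlinarith [mul_pos hlam (neg_pos.mpr hA), mul_pos heta (neg_pos.mpr hB)]
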